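/- Let α, β ∈ [0,1] and set π₀ = β, π₁ = 1 - α. If the balanced error rate BER = (α + β)/2 of the purely biased classifier satisfies BER ≤ ε with ε < 1/2 and π₀ = β > 0, then the disparate impact DI = π₀/π₁ satisfies DI ≤ 1 - (1 - 2ε)/(β + 1 - 2ε). -/

import Mathlib

/-- If the purely biased classifier with false-negative rate `α` and false-positive
rate `β` has balanced error rate `(α+β)/2 ≤ ε < 1/2` and `β > 0`, then the disparate
impact `π₀/π₁ = β/(1-α)` is at most `1 - (1-2ε)/(β+1-2ε)`. -/
theorem di_bound_from_ber (α β ε : ℝ)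
    (hα : α ∈ Set.Icc (0:ℝ) 1) (hβ : β ∈ Set.Icc (0:ℝ) 1)
    (hβpos : 0 < β) (hε : ε < 1/2)
    (hber : (α + β) / 2 ≤ ε) :
    β / (1 - α) ≤ 1 - (1 - 2*ε) / (β + 1 - 2*ε) := by
  have hd : 0 < β + 1 - 2*ε := by linarith
  have hle : β + 1 - 2*ε ≤ 1 - α := by linarith
  have h1 : β / (1 - α) ≤ β / (β + 1 - 2*ε) :=
    div_le_div_of_nonneg_left hβpos.le hd hle
  have h2 : β / (β + 1 - 2*ε) = 1 - (1 - 2*ε) / (β + 1 - 2*ε) := by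
    field_simp
    ring
  linarith [h1, h2.le, h2.ge]
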